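/- Let D ⊆ ℝ^m be a nonempty compact set, x ∈ ℝ^K, and g : ℝ^K × ℝ^m → ℝ satisfying: (A1) g is bounded on ℝ^K × D and g(·, z) is differentiable at x uniformly in z ∈ D with derivatives D_x g(x,z); (A2) z ↦ D_x g(x, z) is continuous on D and z ↦ g(x, z) is lower semicontinuous on D. Define V(y) := inf_{z∈D} g(y, z), P̃_D(x) := {z ∈ D : V(x) = g(x,z)}, and Y(x) := {D_x g(x,z) : z ∈ P̃_D(x)}. Then for every direction q ∈ ℝ^K the one-sided directional derivative D⁺V(x)(q) := lim_{h→0⁺} (V(x + h·q) − V(x))/h exists and D⁺V(x)(q) = min_{y ∈ Y(x)} ⟨y, q⟩ = min_{p ∈ D⁺V(x)} ⟨p, q⟩, where D⁺V(x) denotes the superdifferential of V at x. -/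

import Mathlib

open Filter Topology
open Set
open scoped RealInnerProductSpace

/-- The superdifferential `D⁺V(x)`: the set of `p` with
`limsup_{y→x} (V(y) − V(x) − ⟪p, y − x⟫)/‖y − x‖ ≤ 0`. -/
noncomputable def superDiff {K : ℕ} (V : EuclideanSpace ℝ (Fin K) → ℝ)
    (x : EuclideanSpace ℝ (Fin K)) : Set (EuclideanSpace ℝ (Fin K)) :=
  {p | Filter.limsup
      (fun y => (((V y - V x - ⟪p, y - x⟫) / ‖y - x‖ : ℝ) : EReal)) (𝓝[≠] x)
    ≤ 0}


lemma lsc_sublevel_closed {E : Type*} [TopologicalSpace E] {s : Set E} (hs : IsClosed s)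
    {f : E → ℝ} (hf : LowerSemicontinuousOn f s) (a : ℝ) :
    IsClosed {z ∈ s | f z ≤ a} := by
  rw [← isOpen_compl_iff, isOpen_iff_mem_nhds]
  intro z hz
  by_cases hzs : z ∈ s
  · have hlt : a < f z := by
      by_contra hle
      exact hz ⟨hzs, le_of_not_gt hle⟩
    have := hf z hzs a hlt
    rw [eventually_nhdsWithin_iff] at this
    filter_upwards [this] with y hy
    intro ⟨hys, hyle⟩
    exact absurd (hy hys) (not_lt.2 hyle)
  · filter_upwards [hs.isOpen_compl.mem_nhds hzs] with y hy
    intro ⟨hys, _⟩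
    exact hy hys

lemma lsc_exists_min {E : Type*} [MetricSpace E] {s : Set E} (hs : IsCompact s)
    (hne : s.Nonempty) {f : E → ℝ} (hf : LowerSemicontinuousOn f s)
    (hbd : BddBelow (f '' s)) : ∃ z ∈ s, ∀ w ∈ s, f z ≤ f w := by
  set a := sInf (f '' s) with ha
  have hseq : ∀ n : ℕ, ∃ z ∈ s, f z < a + 1 / (n + 1) := by
    intro n
    have hpos : (0:ℝ) < 1 / (n + 1) := by positivity
    obtain ⟨y, ⟨z, hzs, rfl⟩, hlt⟩ :=
      exists_lt_of_csInf_lt (hne.image f) (lt_add_of_pos_right a hpos)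
    exact ⟨z, hzs, hlt⟩
  choose u hu hfu using hseq
  obtain ⟨z, hz, φ, hφ, hconv⟩ := hs.tendsto_subseq hu
  refine ⟨z, hz, fun w hw => ?_⟩
  have hfz : f z ≤ a := by
    by_contra hlt
    push_neg at hlt
    set c := (a + f z) / 2 with hc
    have hac : a < c := by simp [hc]; linarith
    have hcf : c < f z := by simp [hc]; linarith
    have hconv' : Tendsto (fun n => u (φ n)) atTop (𝓝[s] z) :=
      tendsto_nhdsWithin_of_tendsto_nhds_of_eventually_within _ hconv
        (Eventually.of_forall fun n => hu (φ n))
    have h1 : ∀ᶠ n in atTop, c < f (u (φ n)) :=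
      hconv'.eventually (hf z hz c hcf)
    have h2 : ∀ᶠ n in atTop, (1:ℝ) / (φ n + 1) < c - a := by
      have htend : Tendsto (fun n : ℕ => (1:ℝ) / (φ n + 1)) atTop (𝓝 0) := by
        apply Tendsto.comp (tendsto_one_div_add_atTop_nhds_zero_nat)
        exact hφ.tendsto_atTop
      exact htend.eventually (eventually_lt_nhds (by linarith : (0:ℝ) < c - a))
    obtain ⟨n, hn1, hn2⟩ := (h1.and h2).exists
    have := hfu (φ n)
    linarith
  exact hfz.trans (csInf_le hbd ⟨w, hw, rfl⟩)

set_option maxHeartbeats 1600000 in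
/-- envelope theorem, directional derivative part: with
`V(y) = inf_{z∈D} g(y,z)` as in the envelope theorem, for every direction `q`
the one-sided directional derivative `D⁺V(x)(q) = lim_{h→0⁺}(V(x+hq) − V(x))/h`
exists and equals `min_{y∈Y(x)} ⟪y, q⟫ = min_{p∈D⁺V(x)} ⟪p, q⟫`. -/
theorem stmt7 {K m : ℕ}
    (D : Set (EuclideanSpace ℝ (Fin m))) (hne : D.Nonempty) (hcomp : IsCompact D)
    (x : EuclideanSpace ℝ (Fin K))
    (g : EuclideanSpace ℝ (Fin K) → EuclideanSpace ℝ (Fin m) → ℝ)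
    (Dg : EuclideanSpace ℝ (Fin m) → EuclideanSpace ℝ (Fin K))
    (hbdd : ∃ M : ℝ, ∀ y, ∀ z ∈ D, |g y z| ≤ M)
    (hdiff : ∀ ε > (0 : ℝ), ∃ δ > (0 : ℝ), ∀ z ∈ D, ∀ y,
      ‖y - x‖ < δ → |g y z - g x z - ⟪Dg z, y - x⟫| ≤ ε * ‖y - x‖)
    (hDgcont : ContinuousOn Dg D)
    (hglsc : LowerSemicontinuousOn (fun z => g x z) D)
    (V : EuclideanSpace ℝ (Fin K) → ℝ)
    (hV : ∀ y, V y = sInf ((fun z => g y z) '' D))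
    (Pt : Set (EuclideanSpace ℝ (Fin m))) (hPt : Pt = {z ∈ D | V x = g x z})
    (Y : Set (EuclideanSpace ℝ (Fin K))) (hY : Y = Dg '' Pt) :
    ∀ q : EuclideanSpace ℝ (Fin K), ∃ L : ℝ,
      Tendsto (fun h : ℝ => (V (x + h • q) - V x) / h) (𝓝[>] (0 : ℝ)) (𝓝 L) ∧
      IsLeast ((fun y => ⟪y, q⟫) '' Y) L ∧
      IsLeast ((fun p => ⟪p, q⟫) '' superDiff V x) L := by
  intro q
  obtain ⟨M, hM⟩ := hbdd
  -- basic facts about V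
  have hbdb : ∀ y, BddBelow ((fun z => g y z) '' D) := by
    intro y
    refine ⟨-M, ?_⟩
    rintro _ ⟨z, hz, rfl⟩
    linarith [(abs_le.1 (hM y z hz)).1]
  have hVle : ∀ y, ∀ z ∈ D, V y ≤ g y z := by
    intro y z hz
    rw [hV y]
    exact csInf_le (hbdb y) ⟨z, hz, rfl⟩
  -- Pt as a sublevel set
  have hPt' : Pt = {z ∈ D | g x z ≤ V x} := by
    rw [hPt]; ext z
    simp only [mem_setOf_eq]
    exact ⟨fun ⟨h1, h2⟩ => ⟨h1, h2.ge⟩, fun ⟨h1, h2⟩ => ⟨h1, le_antisymm (hVle x z h1) h2⟩⟩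
  have hPtsub : Pt ⊆ D := by rw [hPt']; exact fun z hz => hz.1
  -- Pt is nonempty
  have hPtne : Pt.Nonempty := by
    obtain ⟨z₀, hz₀, hmin⟩ := lsc_exists_min hcomp hne hglsc (hbdb x)
    refine ⟨z₀, ?_⟩
    rw [hPt']
    refine ⟨hz₀, ?_⟩
    rw [hV x]
    exact le_csInf (hne.image _) (by rintro _ ⟨w, hw, rfl⟩; exact hmin w hw)
  -- Pt is compact
  have hPtcomp : IsCompact Pt := by
    refine hcomp.of_isClosed_subset ?_ hPtsub
    rw [hPt']
    exact lsc_sublevel_closed hcomp.isClosed hglsc (V x)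
  -- the minimizer over Pt
  have hinnercont : ContinuousOn (fun z => ⟪Dg z, q⟫) D :=
    hDgcont.inner continuousOn_const
  obtain ⟨z₀, hz₀Pt, hz₀min⟩ :=
    hPtcomp.exists_isMinOn hPtne ((hinnercont.mono hPtsub))
  set L : ℝ := ⟪Dg z₀, q⟫ with hL
  have hz₀D : z₀ ∈ D := hPtsub hz₀Pt
  have hgz₀ : g x z₀ = V x := ((hPt ▸ hz₀Pt : z₀ ∈ {z ∈ D | V x = g x z}).2).symm
  -- bound on Dg over D
  obtain ⟨C₁, hC₁⟩ := hcomp.exists_bound_of_continuousOn hDgcont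
  have hC₁0 : 0 ≤ C₁ := le_trans (norm_nonneg _) (hC₁ z₀ hz₀D)
  have hq1 : (0:ℝ) < ‖q‖ + 1 := by positivity
  -- norm computation
  have hnorm : ∀ h : ℝ, 0 < h → ‖(x + h • q) - x‖ = h * ‖q‖ := by
    intro h h0
    rw [add_sub_cancel_left, norm_smul, Real.norm_eq_abs, abs_of_pos h0]
  have hinner : ∀ (p : EuclideanSpace ℝ (Fin K)) (h : ℝ),
      ⟪p, (x + h • q) - x⟫ = h * ⟪p, q⟫ := by
    intro p h
    rw [add_sub_cancel_left, real_inner_smul_right]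
  -- UPPER eventual bound
  have keyUB : ∀ ε > (0:ℝ), ∀ᶠ h in 𝓝[>] (0:ℝ), (V (x + h • q) - V x) / h ≤ L + ε := by
    intro ε hε
    set ε' := ε / (‖q‖ + 1) with hε'def
    have hε'pos : 0 < ε' := by positivity
    have hε'q : ε' * ‖q‖ ≤ ε := by
      rw [hε'def, div_mul_eq_mul_div, div_le_iff₀ hq1]
      nlinarith [norm_nonneg q]
    obtain ⟨δ, hδ, hδ'⟩ := hdiff ε' hε'pos
    have hmem : Ioo (0:ℝ) (δ / (‖q‖ + 1)) ∈ 𝓝[>] (0:ℝ) :=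
      Ioo_mem_nhdsGT_of_mem ⟨le_refl _, by positivity⟩
    filter_upwards [hmem] with h hh
    obtain ⟨h0, hlt⟩ := hh
    have hnd : ‖(x + h • q) - x‖ < δ := by
      rw [hnorm h h0]
      calc h * ‖q‖ ≤ h * (‖q‖ + 1) := by nlinarith
        _ < δ := by rw [← lt_div_iff₀ hq1] at *; exact hlt
    have hb := hδ' z₀ hz₀D (x + h • q) hnd
    rw [hinner, hnorm h h0] at hb
    have h1 : V (x + h • q) ≤ g (x + h • q) z₀ := hVle _ z₀ hz₀D
    have h2 : g (x + h • q) z₀ ≤ g x z₀ + h * L + ε' * (h * ‖q‖) := by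
      have h2a := (abs_le.1 hb).2
      have h2b : h * L = h * ⟪Dg z₀, q⟫ := by rw [hL]
      linarith
    rw [div_le_iff₀ h0]
    have h3 : ε' * (h * ‖q‖) ≤ h * ε := by
      have : ε' * (h * ‖q‖) = (ε' * ‖q‖) * h := by ring
      rw [this]
      nlinarith
    have h4 : (L + ε) * h = h * L + h * ε := by ring
    linarith
  -- LOWER eventual bound
  have keyLB : ∀ ε > (0:ℝ), ∀ᶠ h in 𝓝[>] (0:ℝ), L - ε ≤ (V (x + h • q) - V x) / h := by
    intro ε hε
    set ε' := ε / (4 * (‖q‖ + 1)) with hε'def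
    have hε'pos : 0 < ε' := by positivity
    have hε'q : ε' * ‖q‖ ≤ ε / 4 := by
      rw [hε'def, div_mul_eq_mul_div, div_le_div_iff₀ (by positivity) (by norm_num : (0:ℝ) < 4)]
      nlinarith [norm_nonneg q]
    obtain ⟨δ, hδ, hδ'⟩ := hdiff ε' hε'pos
    set C : Set (EuclideanSpace ℝ (Fin m)) := {z ∈ D | ⟪Dg z, q⟫ ≤ L - ε / 4} with hC
    have hCcomp : IsCompact C :=
      hcomp.of_isClosed_subset
        (lsc_sublevel_closed hcomp.isClosed hinnercont.lowerSemicontinuousOn (L - ε/4))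
        (fun z hz => hz.1)
    have hCPt : ∀ z ∈ C, z ∉ Pt := by
      intro z hzC hzPt
      have h1 : (⟪Dg z₀, q⟫ : ℝ) ≤ ⟪Dg z, q⟫ := hz₀min hzPt
      have h2 : (⟪Dg z, q⟫ : ℝ) ≤ L - ε / 4 := hzC.2
      linarith [hL.le, hL.ge]
    obtain ⟨η, hηpos, hηprop⟩ : ∃ η > (0:ℝ), ∀ z ∈ C, V x + η ≤ g x z := by
      rcases C.eq_empty_or_nonempty with hCe | hCne
      · exact ⟨1, one_pos, by rw [hCe]; simp⟩
      · obtain ⟨zc, hzc, hzcmin⟩ := lsc_exists_min hCcomp hCne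
          (hglsc.mono (fun z hz => hz.1))
          ((hbdb x).mono (image_mono (fun z hz => hz.1)))
        have hzcD : zc ∈ D := hzc.1
        have hVlt : V x < g x zc := by
          rcases lt_or_eq_of_le (hVle x zc hzcD) with h | h
          · exact h
          · exact absurd (hPt ▸ ⟨hzcD, h⟩ : zc ∈ Pt) (hCPt zc hzc)
        exact ⟨g x zc - V x, by linarith, fun z hz => by linarith [hzcmin z hz]⟩
    set B : ℝ := |L| + ε + C₁ * ‖q‖ + 1 with hB
    have hBpos : 0 < B := by positivity
    have hmem : Ioo (0:ℝ) (min (δ / (‖q‖ + 1)) (η / B)) ∈ 𝓝[>] (0:ℝ) :=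
      Ioo_mem_nhdsGT_of_mem ⟨le_refl _, by positivity⟩
    filter_upwards [hmem] with h hh
    obtain ⟨h0, hlt⟩ := hh
    have hlt1 : h < δ / (‖q‖ + 1) := lt_of_lt_of_le hlt (min_le_left _ _)
    have hlt2 : h * B < η := by
      have : h < η / B := lt_of_lt_of_le hlt (min_le_right _ _)
      rwa [lt_div_iff₀ hBpos] at this
    have hnd : ‖(x + h • q) - x‖ < δ := by
      rw [hnorm h h0]
      calc h * ‖q‖ ≤ h * (‖q‖ + 1) := by nlinarith
        _ < δ := by rwa [← lt_div_iff₀ hq1]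
    -- near-minimizer
    have hVsInf : V (x + h • q) = sInf ((fun z => g (x + h • q) z) '' D) := hV _
    obtain ⟨zh, hzhD, hzh⟩ : ∃ zh ∈ D,
        g (x + h • q) zh < V (x + h • q) + h * (ε / 4) := by
      have hlt' : sInf ((fun z => g (x + h • q) z) '' D) <
          V (x + h • q) + h * (ε / 4) := by
        rw [← hVsInf]; nlinarith
      obtain ⟨y, ⟨z, hz, rfl⟩, hy⟩ := exists_lt_of_csInf_lt (hne.image _) hlt'
      exact ⟨z, hz, hy⟩
    have hder := hδ' zh hzhD (x + h • q) hnd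
    rw [hinner, hnorm h h0] at hder
    have hderl := (abs_le.1 hder).1
    have hderu := (abs_le.1 hder).2
    -- upper bound on V(x + hq)
    have hVub : V (x + h • q) ≤ V x + h * L + ε' * (h * ‖q‖) := by
      have hb := hδ' z₀ hz₀D (x + h • q) hnd
      rw [hinner, hnorm h h0] at hb
      have h1 : V (x + h • q) ≤ g (x + h • q) z₀ := hVle _ z₀ hz₀D
      have h2 := (abs_le.1 hb).2
      have h2b : h * L = h * ⟪Dg z₀, q⟫ := by rw [hL]
      linarith [hgz₀]
    -- zh ∉ C
    have hzhC : zh ∉ C := by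
      intro hzhC
      have h1 : V x + η ≤ g x zh := hηprop zh hzhC
      have h3 : |⟪Dg zh, q⟫| ≤ C₁ * ‖q‖ := by
        calc |⟪Dg zh, q⟫| ≤ ‖Dg zh‖ * ‖q‖ := abs_real_inner_le_norm _ _
          _ ≤ C₁ * ‖q‖ := by nlinarith [hC₁ zh hzhD, norm_nonneg q]
      have h4 : V x ≤ g x zh := hVle x zh hzhD
      have hεh : ε' * (h * ‖q‖) ≤ h * (ε / 4) := by
        have : ε' * (h * ‖q‖) = (ε' * ‖q‖) * h := by ring
        rw [this]; nlinarith
      have habs1 : -(h * ⟪Dg zh, q⟫) ≤ h * (C₁ * ‖q‖) := by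
        nlinarith [(abs_le.1 h3).1]
      have habs2 : h * L ≤ h * |L| := by nlinarith [le_abs_self L]
      have hBexp : h * B = h * |L| + h * ε + h * (C₁ * ‖q‖) + h := by rw [hB]; ring
      have hhe : 0 ≤ h * ε := by positivity
      linarith [hderl, hzh, hVub, hlt2, h0]
    have hzhgood : L - ε / 4 < ⟪Dg zh, q⟫ := by
      by_contra hcon
      exact hzhC ⟨hzhD, le_of_not_gt hcon⟩
    -- conclude
    have h4 : V x ≤ g x zh := hVle x zh hzhD
    have hεh : ε' * (h * ‖q‖) ≤ h * (ε / 4) := by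
      have : ε' * (h * ‖q‖) = (ε' * ‖q‖) * h := by ring
      rw [this]; nlinarith
    rw [le_div_iff₀ h0]
    have hP : h * (L - ε / 4) ≤ h * ⟪Dg zh, q⟫ := by nlinarith [hzhgood]
    have hexp1 : (L - ε) * h = h * L - h * ε := by ring
    have hexp2 : h * (L - ε / 4) = h * L - h * (ε / 4) := by ring
    have hhe : 0 ≤ h * ε := by positivity
    have hhe4 : h * (ε / 4) ≤ h * ε / 2 := by nlinarith
    linarith [hderl, hzh]
  -- the limit
  have hlim : Tendsto (fun h : ℝ => (V (x + h • q) - V x) / h) (𝓝[>] (0:ℝ)) (𝓝 L) := by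
    rw [Metric.tendsto_nhds]
    intro ε hε
    filter_upwards [keyUB (ε/2) (by linarith), keyLB (ε/2) (by linarith)] with h h1 h2
    rw [Real.dist_eq, abs_sub_lt_iff]
    constructor <;> linarith
  -- membership of Dg z for z ∈ Pt in superDiff
  have hYsub : ∀ z ∈ Pt, Dg z ∈ superDiff V x := by
    intro z hzPt
    have hzD : z ∈ D := hPtsub hzPt
    have hgz : g x z = V x := ((hPt ▸ hzPt : z ∈ {w ∈ D | V x = g x w}).2).symm
    show limsup _ _ ≤ (0 : EReal)
    by_contra hcon
    push_neg at hcon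
    obtain ⟨c, hc0, hclim⟩ := EReal.lt_iff_exists_real_btwn.1 hcon
    have hcpos : (0:ℝ) < c := by exact_mod_cast hc0
    have : limsup (fun y => (((V y - V x - ⟪Dg z, y - x⟫) / ‖y - x‖ : ℝ) : EReal))
        (𝓝[≠] x) ≤ (c : EReal) := by
      refine limsup_le_of_le (by isBoundedDefault) ?_
      obtain ⟨δ, hδ, hδ'⟩ := hdiff c hcpos
      have hball : {y | ‖y - x‖ < δ} ∈ 𝓝[≠] x := by
        apply mem_nhdsWithin_of_mem_nhds
        have := Metric.ball_mem_nhds x hδ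
        simpa [Metric.ball, dist_eq_norm] using this
      filter_upwards [hball, self_mem_nhdsWithin] with y hy hyne
      have hyx : y ≠ x := hyne
      have hpos : 0 < ‖y - x‖ := by
        rw [norm_pos_iff, sub_ne_zero]; exact hyx
      have hb := hδ' z hzD y hy
      have h1 : V y ≤ g y z := hVle y z hzD
      have hnum : V y - V x - ⟪Dg z, y - x⟫ ≤ c * ‖y - x‖ := by
        have := (abs_le.1 hb).2
        linarith [hgz.ge, hgz.le]
      have : (V y - V x - ⟪Dg z, y - x⟫) / ‖y - x‖ ≤ c := by
        rw [div_le_iff₀ hpos]; linarith [hnum]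
      exact_mod_cast this
    exact absurd (lt_of_lt_of_le hclim this) (lt_irrefl _)
  -- lower bound over the superdifferential
  have hSDlb : ∀ p ∈ superDiff V x, L ≤ ⟪p, q⟫ := by
    intro p hp
    by_cases hq : q = 0
    · subst hq
      simp only [inner_zero_right, hL] at *
      simp
    · have hqpos : 0 < ‖q‖ := norm_pos_iff.2 hq
      set φ : ℝ → EuclideanSpace ℝ (Fin K) := fun h => x + h • q with hφdef
      have hφcont : Tendsto φ (𝓝[>] (0:ℝ)) (𝓝 x) := by
        have : Continuous φ := by continuity
        have := this.tendsto (0:ℝ)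
        simp only [hφdef, zero_smul, add_zero] at this
        exact this.mono_left nhdsWithin_le_nhds
      have hφmem : ∀ᶠ h in 𝓝[>] (0:ℝ), φ h ∈ ({x}ᶜ : Set _) := by
        filter_upwards [self_mem_nhdsWithin] with h hh
        simp only [hφdef, mem_compl_iff, mem_singleton_iff]
        intro hcon
        have : h • q = 0 := by
          have := congrArg (· - x) hcon
          simpa [add_sub_cancel_left] using this
        rcases smul_eq_zero.1 this with h0 | h0
        · exact absurd h0 (ne_of_gt hh)
        · exact hq h0
      have hφtend : Tendsto φ (𝓝[>] (0:ℝ)) (𝓝[≠] x) :=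
        tendsto_nhdsWithin_of_tendsto_nhds_of_eventually_within _ hφcont hφmem
      set u : EuclideanSpace ℝ (Fin K) → EReal :=
        fun y => (((V y - V x - ⟪p, y - x⟫) / ‖y - x‖ : ℝ) : EReal) with hu
      set c : ℝ := (L - ⟪p, q⟫) / ‖q‖ with hcdef
      have hcomp2 : Tendsto (u ∘ φ) (𝓝[>] (0:ℝ)) (𝓝 (c : EReal)) := by
        have hreal : Tendsto (fun h : ℝ =>
            (V (x + h • q) - V x - ⟪p, (x + h • q) - x⟫) / ‖(x + h • q) - x‖)
            (𝓝[>] (0:ℝ)) (𝓝 c) := by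
          have hr2 : Tendsto (fun h : ℝ =>
              ((V (x + h • q) - V x) / h - ⟪p, q⟫) / ‖q‖) (𝓝[>] (0:ℝ)) (𝓝 c) := by
            rw [hcdef]
            exact (hlim.sub_const _).div_const _
          apply hr2.congr'
          filter_upwards [self_mem_nhdsWithin] with h hh
          have h0 : (0:ℝ) < h := hh
          rw [hinner, hnorm h h0]
          rw [div_sub' h0.ne', div_div]
        exact EReal.tendsto_coe.2 hreal
      have hlimsup_eq : limsup (u ∘ φ) (𝓝[>] (0:ℝ)) = (c : EReal) :=
        hcomp2.limsup_eq
      have hle : limsup (u ∘ φ) (𝓝[>] (0:ℝ)) ≤ limsup u (𝓝[≠] x) := by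
        rw [limsup_comp]
        exact limsup_le_limsup_of_le hφtend
      have hc0 : (c : EReal) ≤ 0 := by
        rw [← hlimsup_eq]
        exact hle.trans hp
      have hc0' : c ≤ 0 := by exact_mod_cast hc0
      rw [hcdef, div_nonpos_iff] at hc0'
      rcases hc0' with ⟨h1, h2⟩ | ⟨h1, h2⟩
      · linarith [hqpos.le, le_antisymm h2 hqpos.le]
      · linarith
  refine ⟨L, hlim, ⟨⟨Dg z₀, by rw [hY]; exact ⟨z₀, hz₀Pt, rfl⟩, rfl⟩, ?_⟩,
    ⟨⟨Dg z₀, hYsub z₀ hz₀Pt, rfl⟩, ?_⟩⟩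
  · rintro _ ⟨p, hpY, rfl⟩
    rw [hY] at hpY
    obtain ⟨z, hzPt, rfl⟩ := hpY
    exact hz₀min hzPt
  · rintro _ ⟨p, hpSD, rfl⟩
    exact hSDlb p hpSD
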